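/- For every α ≥ 1 there exists an instance on two tasks such that any aggregation rule minimizing a distance to the profile returns a schedule whose total tardiness exceeds α times the minimum total tardiness. Concretely, with tasks a, b where p_a = 1, p_b = k, v ≥ 3 odd voters, ⌊(v-1)/2⌋ preferring A = (a,b) and ⌈(v+1)/2⌉ preferring B = (b,a): the distance-minimizing rule returns B, the total tardiness of A is ⌈(v+1)/2⌉ and that of B is ⌊(v-1)/2⌋·k, so the ratio tends to infinity as k grows. -/

import Mathlib

/-- Completion time of task `i` in schedule `S`. -/
noncomputable def Ctime {n : ℕ} (p : Fin n → ℝ) (S : Equiv.Perm (Fin n)) (i : Fin n) : ℝ :=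
  ∑ j ∈ Finset.univ.filter (fun j => S j ≤ S i), p j

/-- Total tardiness of schedule `S` w.r.t. profile `P`. -/
noncomputable def Tard {n v : ℕ} (p : Fin n → ℝ) (P : Fin v → Equiv.Perm (Fin n))
    (S : Equiv.Perm (Fin n)) : ℝ :=
  ∑ k, ∑ i, max 0 (Ctime p S i - Ctime p (P k) i)

lemma sum_if_aux (v m1 : ℕ) (h : m1 ≤ v) (a b : ℝ) :
    (∑ k : Fin v, if (k:ℕ) < m1 then a else b) = m1 * a + (v - m1 : ℕ) * b := by
  rw [Fin.sum_univ_eq_sum_range (fun j => if j < m1 then a else b)]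
  rw [← Finset.sum_range_add_sum_Ico _ h]
  rw [Finset.sum_congr rfl (fun j hj => if_pos (Finset.mem_range.mp hj)),
      Finset.sum_congr rfl (fun j hj => if_neg (by
        have := (Finset.mem_Ico.mp hj).1; omega))]
  simp [Finset.sum_const, Nat.card_Ico, mul_comm]

lemma Ctime_one_0 (p : Fin 2 → ℝ) : Ctime p 1 0 = p 0 := by
  simp [Ctime, Finset.sum_filter, Fin.sum_univ_two]

lemma Ctime_one_1 (p : Fin 2 → ℝ) : Ctime p 1 1 = p 0 + p 1 := by
  simp [Ctime, Finset.sum_filter, Fin.sum_univ_two, Fin.le_def]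

lemma Ctime_swap_0 (p : Fin 2 → ℝ) : Ctime p (Equiv.swap 0 1) 0 = p 0 + p 1 := by
  simp [Ctime, Finset.sum_filter, Fin.sum_univ_two, Equiv.swap_apply_left, Equiv.swap_apply_right]

lemma Ctime_swap_1 (p : Fin 2 → ℝ) : Ctime p (Equiv.swap 0 1) 1 = p 1 := by
  simp [Ctime, Finset.sum_filter, Fin.sum_univ_two, Equiv.swap_apply_left, Equiv.swap_apply_right]

lemma perm_two (T : Equiv.Perm (Fin 2)) : T = 1 ∨ T = Equiv.swap 0 1 := by
  revert T; decide

theorem stmt6 (α : ℝ) (hα : 1 ≤ α) (v : ℕ) (hv : 3 ≤ v) (hodd : Odd v) :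
    ∃ kk : ℝ, 1 ≤ kk ∧
      ∀ (p : Fin 2 → ℝ), p 0 = 1 → p 1 = kk →
      ∀ (P : Fin v → Equiv.Perm (Fin 2)),
        (∀ k : Fin v, P k = if (k : ℕ) < (v - 1) / 2 then 1 else Equiv.swap 0 1) →
        (∀ d : Equiv.Perm (Fin 2) → Equiv.Perm (Fin 2) → ℝ,
          (∀ S S', 0 ≤ d S S') → (∀ S S', d S S' = 0 ↔ S = S') →
          (∀ S S', d S S' = d S' S) → (∀ S S' z, d S S' ≤ d S z + d z S') →
          ∀ S : Equiv.Perm (Fin 2),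
            (∀ S', ∑ k, d S (P k) ≤ ∑ k, d S' (P k)) → S = Equiv.swap 0 1) ∧
        Tard p P 1 = (((v + 1) / 2 : ℕ) : ℝ) ∧
        Tard p P (Equiv.swap 0 1) = (((v - 1) / 2 : ℕ) : ℝ) * kk ∧
        Tard p P (Equiv.swap 0 1) > α * Tard p P 1 := by
  obtain ⟨t, ht⟩ := hodd
  set m1 : ℕ := (v - 1) / 2 with hm1
  have hm1v : m1 ≤ v := by omega
  have hrest : v - m1 = (v + 1) / 2 := by omega
  have hm1pos : 1 ≤ m1 := by omega
  have hm2v : (v + 1) / 2 ≤ v := by omega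
  have hvR : (3 : ℝ) ≤ (v : ℕ) := by exact_mod_cast hv
  refine ⟨2 * α * v, by nlinarith, ?_⟩
  intro p hp0 hp1 P hP
  have hkk1 : (1 : ℝ) ≤ p 1 := by rw [hp1]; nlinarith
  -- key sum lemma
  have sumP : ∀ f : Equiv.Perm (Fin 2) → ℝ,
      (∑ k, f (P k)) = m1 * f 1 + ((v + 1) / 2 : ℕ) * f (Equiv.swap 0 1) := by
    intro f
    have : (∑ k, f (P k)) = ∑ k : Fin v, if (k:ℕ) < m1 then f 1 else f (Equiv.swap 0 1) := by
      apply Finset.sum_congr rfl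
      intro k _
      rw [hP k]
      split <;> rfl
    rw [this, sum_if_aux v m1 hm1v, hrest]
  -- per-voter tardiness values
  have g1_one : (∑ i, max 0 (Ctime p 1 i - Ctime p 1 i)) = 0 := by simp
  have g1_swap : (∑ i, max 0 (Ctime p 1 i - Ctime p (Equiv.swap 0 1) i)) = 1 := by
    rw [Fin.sum_univ_two, Ctime_one_0, Ctime_one_1, Ctime_swap_0, Ctime_swap_1, hp0]
    rw [max_eq_left (by linarith), max_eq_right (by linarith)]
    ring
  have gs_one : (∑ i, max 0 (Ctime p (Equiv.swap 0 1) i - Ctime p 1 i)) = p 1 := by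
    rw [Fin.sum_univ_two, Ctime_one_0, Ctime_one_1, Ctime_swap_0, Ctime_swap_1, hp0]
    rw [max_eq_right (by linarith), max_eq_left (by linarith)]
    ring
  have gs_swap : (∑ i, max 0 (Ctime p (Equiv.swap 0 1) i - Ctime p (Equiv.swap 0 1) i)) = 0 := by
    simp
  have hT1 : Tard p P 1 = (((v + 1) / 2 : ℕ) : ℝ) := by
    rw [Tard, sumP (fun V => ∑ i, max 0 (Ctime p 1 i - Ctime p V i))]
    rw [g1_one, g1_swap]; ring
  have hTs : Tard p P (Equiv.swap 0 1) = (m1 : ℝ) * p 1 := by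
    rw [Tard, sumP (fun V => ∑ i, max 0 (Ctime p (Equiv.swap 0 1) i - Ctime p V i))]
    rw [gs_one, gs_swap]; ring
  refine ⟨?_, hT1, by rw [hTs, hp1], ?_⟩
  · -- distance minimization returns swap
    intro d hd0 hdeq hdsym hdtri S hS
    rcases perm_two S with h1 | h1
    · exfalso
      subst h1
      have h := hS (Equiv.swap 0 1)
      rw [sumP (d 1), sumP (d (Equiv.swap 0 1))] at h
      have e1 : d 1 1 = 0 := (hdeq 1 1).mpr rfl
      have e2 : d (Equiv.swap 0 1) (Equiv.swap 0 1) = 0 := (hdeq _ _).mpr rfl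
      have e3 : d (Equiv.swap 0 1) 1 = d 1 (Equiv.swap 0 1) := hdsym _ _
      rw [e1, e2, e3] at h
      have hD : 0 ≤ d 1 (Equiv.swap 0 1) := hd0 _ _
      have hlt : (m1 : ℝ) < ((v + 1) / 2 : ℕ) := by exact_mod_cast (by omega : m1 < (v+1)/2)
      have hD0 : d 1 (Equiv.swap 0 1) = 0 := by nlinarith
      have : (1 : Equiv.Perm (Fin 2)) = Equiv.swap 0 1 := (hdeq _ _).mp hD0
      exact absurd this (by decide)
    · exact h1
  · -- ratio
    rw [hT1, hTs, hp1]
    have hm1R : (1 : ℝ) ≤ (m1 : ℕ) := by exact_mod_cast hm1pos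
    have hm2R : (((v + 1) / 2 : ℕ) : ℝ) ≤ v := by exact_mod_cast hm2v
    nlinarith
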